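/- Let X ⊆ ℝⁿ be compact, and let F, f : ℝⁿ × ℝᵐ → ℝ be twice continuously differentiable with: for every x, F(x,·) convex, L_F-smooth and bounded below, and f(x,·) σ-strongly convex (σ > 0) and L_f-smooth; assume f is level-bounded in y uniformly in x ∈ X (for every r ∈ ℝ the set { y : ∃ x ∈ X, f(x,y) ≤ r } is bounded). Let y*(x) denote the unique minimizer of f(x,·), and define y_{k+1}(x) = y_k(x) − s( α_k μ ∇_y F(x, y_k(x)) + β_k (1−μ) ∇_y f(x, y_k(x)) ), y₀(x) = y₀, with s ∈ (0, 1/max(L_F, L_f)), μ ∈ (0,1), positive nonincreasing α_k → 0, and nonincreasing β_k ∈ [β̲, 1] (β̲ > 0) with |β_k − β_{k−1}| ≤ c_β/(k+1)². Then sup_{x∈X} ‖y_k(x) − y*(x)‖ → 0 as k → ∞. -/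

import Mathlib

open Filter Topology Set Metric

section Aux

variable {E : Type*} [NormedAddCommGroup E] [InnerProductSpace ℝ E] [CompleteSpace E]

local notation "⟪" x ", " y "⟫" => @inner ℝ _ _ x y

lemma aux_hasDerivAt_line (g : E → ℝ) (hg : Differentiable ℝ g) (u w : E) (t : ℝ) :
    HasDerivAt (fun t : ℝ => g (u + t • w)) ⟪gradient g (u + t • w), w⟫ t := by
  have hline : HasDerivAt (fun t : ℝ => u + t • w) w t := by
    simpa using ((hasDerivAt_id t).smul_const w).const_add u
  have hgd : HasFDerivAt g (InnerProductSpace.toDual ℝ E (gradient g (u + t • w))) (u + t • w) :=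
    ((hg (u + t • w)).hasGradientAt).hasFDerivAt
  simpa [InnerProductSpace.toDual_apply_apply, -toDual_gradient, Function.comp_def] using hgd.comp_hasDerivAt t hline

lemma aux_first_order (g : E → ℝ) (hg : Differentiable ℝ g) (hconv : ConvexOn ℝ univ g)
    (u v : E) : g u + ⟪gradient g u, v - u⟫ ≤ g v := by
  set φ : ℝ → ℝ := fun t => g (u + t • (v - u)) with hφ
  have hφconv : ConvexOn ℝ univ φ := by
    have := hconv.comp_affineMap (AffineMap.lineMap u v : ℝ →ᵃ[ℝ] E)
    have heq : φ = g ∘ (AffineMap.lineMap u v : ℝ →ᵃ[ℝ] E) := by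
      funext t
      simp [hφ, AffineMap.lineMap_apply, add_comm]
    rw [heq]
    simpa using this
  have hd : HasDerivAt φ ⟪gradient g u, v - u⟫ 0 := by
    have := aux_hasDerivAt_line g hg u (v - u) 0
    simpa using this
  have hslope := hφconv.le_slope_of_hasDerivAt (mem_univ (0:ℝ)) (mem_univ (1:ℝ)) one_pos hd
  have h1 : φ 1 = g v := by simp [hφ]
  have h0 : φ 0 = g u := by simp [hφ]
  rw [slope_def_field] at hslope
  simp [h1, h0, -inner_gradient_left] at hslope
  linarith

lemma aux_descent (g : E → ℝ) (hg : Differentiable ℝ g) {L : ℝ} (hL : 0 ≤ L)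
    (hlip : ∀ a b, ‖gradient g a - gradient g b‖ ≤ L * ‖a - b‖) (u v : E) :
    g v ≤ g u + ⟪gradient g u, v - u⟫ + L * ‖v - u‖ ^ 2 := by
  set ψ : ℝ → ℝ := fun t => g (u + t • (v - u)) - t * ⟪gradient g u, v - u⟫ with hψ
  have hd : ∀ t ∈ Icc (0:ℝ) 1, HasDerivWithinAt ψ
      (⟪gradient g (u + t • (v - u)) - gradient g u, v - u⟫) (Icc 0 1) t := by
    intro t ht
    have h1 := aux_hasDerivAt_line g hg u (v - u) t
    have h2 : HasDerivAt (fun t : ℝ => t * ⟪gradient g u, v - u⟫) ⟪gradient g u, v - u⟫ t := by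
      simpa using (hasDerivAt_id t).mul_const ⟪gradient g u, v - u⟫
    have := (h1.sub h2)
    rw [inner_sub_left]
    exact this.hasDerivWithinAt
  have hbound : ∀ t ∈ Ico (0:ℝ) 1,
      ‖⟪gradient g (u + t • (v - u)) - gradient g u, v - u⟫‖ ≤ L * ‖v - u‖ ^ 2 := by
    intro t ht
    have h1 : ‖⟪gradient g (u + t • (v - u)) - gradient g u, v - u⟫‖
        ≤ ‖gradient g (u + t • (v - u)) - gradient g u‖ * ‖v - u‖ := by
      rw [Real.norm_eq_abs]
      exact abs_real_inner_le_norm _ _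
    have h2 : ‖gradient g (u + t • (v - u)) - gradient g u‖ ≤ L * (t * ‖v - u‖) := by
      have := hlip (u + t • (v - u)) u
      simpa [norm_smul, abs_of_nonneg ht.1] using this
    have h3 : L * (t * ‖v - u‖) ≤ L * ‖v - u‖ := by
      have : t * ‖v - u‖ ≤ 1 * ‖v - u‖ :=
        mul_le_mul_of_nonneg_right ht.2.le (norm_nonneg _)
      nlinarith [norm_nonneg (v - u)]
    calc ‖⟪gradient g (u + t • (v - u)) - gradient g u, v - u⟫‖
        ≤ ‖gradient g (u + t • (v - u)) - gradient g u‖ * ‖v - u‖ := h1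
      _ ≤ (L * ‖v - u‖) * ‖v - u‖ := by
          apply mul_le_mul_of_nonneg_right _ (norm_nonneg _)
          exact h2.trans h3
      _ = L * ‖v - u‖ ^ 2 := by ring
  have := norm_image_sub_le_of_norm_deriv_le_segment' hd hbound 1 (right_mem_Icc.2 zero_le_one)
  have h1 : ψ 1 = g v - ⟪gradient g u, v - u⟫ := by simp [hψ]
  have h0 : ψ 0 = g u := by simp [hψ]
  rw [h1, h0, Real.norm_eq_abs] at this
  have h4 := (abs_le.1 this).2
  linarith


lemma aux_convexOn_normsq : ConvexOn ℝ (univ : Set E) (fun w => ‖w‖ ^ 2) := by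
  constructor
  · exact convex_univ
  · intro x _ y _ a b ha hb hab
    simp only [smul_eq_mul]
    have hxx : ‖a • x + b • y‖ ^ 2 = ⟪a • x + b • y, a • x + b • y⟫ :=
      (real_inner_self_eq_norm_sq _).symm
    have hx : ‖x‖ ^ 2 = ⟪x, x⟫ := (real_inner_self_eq_norm_sq _).symm
    have hy : ‖y‖ ^ 2 = ⟪y, y⟫ := (real_inner_self_eq_norm_sq _).symm
    have hkey : (0:ℝ) ≤ ⟪x - y, x - y⟫ := real_inner_self_nonneg
    have hexp : ⟪x - y, x - y⟫ = ⟪x, x⟫ - 2 * ⟪x, y⟫ + ⟪y, y⟫ := by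
      rw [inner_sub_sub_self]
      rw [real_inner_comm y x]; ring
    rw [hxx, hx, hy]
    have hexp2 : ⟪a • x + b • y, a • x + b • y⟫
        = a^2 * ⟪x, x⟫ + 2*(a*b) * ⟪x, y⟫ + b^2 * ⟪y, y⟫ := by
      simp only [inner_add_add_self, real_inner_smul_left, real_inner_smul_right]
      rw [real_inner_comm y x]
      ring
    rw [hexp2]
    nlinarith [mul_nonneg ha hb, hkey, hexp]

lemma aux_gconv (g : E → ℝ) {σ : ℝ} (hσ : 0 ≤ σ)
    (hstrong : ConvexOn ℝ univ (fun w => g w - σ / 2 * ‖w‖ ^ 2)) :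
    ConvexOn ℝ (univ : Set E) g := by
  have h2 : ConvexOn ℝ (univ : Set E) (fun w => σ / 2 * ‖w‖ ^ 2) := by
    have := ConvexOn.smul (c := σ / 2) (by positivity) (aux_convexOn_normsq (E := E))
    simpa [smul_eq_mul] using this
  have := hstrong.add h2
  have heq : ((fun w => g w - σ / 2 * ‖w‖ ^ 2) + (fun w => σ / 2 * ‖w‖ ^ 2)) = g := by
    funext w
    simp [Pi.add_apply]
  rwa [heq] at this

lemma aux_grad_sub_inner (g : E → ℝ) (hg : Differentiable ℝ g) (c : E) (w : E) :
    HasGradientAt (fun w => g w - ⟪c, w⟫) (gradient g w - c) w := by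
  have h1 : HasFDerivAt g (InnerProductSpace.toDual ℝ E (gradient g w)) w :=
    (hg w).hasGradientAt.hasFDerivAt
  have h2 : HasFDerivAt (fun w : E => ⟪c, w⟫) (InnerProductSpace.toDual ℝ E c) w := by
    exact (InnerProductSpace.toDual ℝ E c).hasFDerivAt (x := w)
  have h3 := h1.sub h2
  rw [← map_sub] at h3
  simpa [-toDual_gradient, Pi.sub_def] using h3.hasGradientAt

lemma aux_coco (g : E → ℝ) (hg : Differentiable ℝ g) (hconv : ConvexOn ℝ univ g)
    {L : ℝ} (hL : 0 < L)
    (hlip : ∀ a b, ‖gradient g a - gradient g b‖ ≤ L * ‖a - b‖) (u v : E) :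
    ‖gradient g u - gradient g v‖ ^ 2 ≤ 2 * L * ⟪gradient g u - gradient g v, u - v⟫ := by
  have key : ∀ p q : E, g p ≤ g q + ⟪gradient g p, p - q⟫
      - (1/(4*L)) * ‖gradient g q - gradient g p‖ ^ 2 := by
    intro p q
    set c := gradient g p with hc
    set φ : E → ℝ := fun w => g w - ⟪c, w⟫ with hφdef
    have hgrad : ∀ w, HasGradientAt φ (gradient g w - c) w := fun w =>
      aux_grad_sub_inner g hg c w
    have hφdiff : Differentiable ℝ φ := fun w => (hgrad w).differentiableAt
    have hφgrad : ∀ w, gradient φ w = gradient g w - c := fun w => (hgrad w).gradient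
    have hφconv : ConvexOn ℝ univ φ := by
      have hlin : ConcaveOn ℝ (univ : Set E) (fun w => ⟪c, w⟫) := by
        have := ((innerSL ℝ c : E →L[ℝ] ℝ) : E →ₗ[ℝ] ℝ).concaveOn (convex_univ)
        simpa using this
      have := hconv.sub hlin
      exact this
    have hφlip : ∀ a b, ‖gradient φ a - gradient φ b‖ ≤ L * ‖a - b‖ := by
      intro a b
      rw [hφgrad, hφgrad, sub_sub_sub_cancel_right]
      exact hlip a b
    have hmin : ∀ w, φ p ≤ φ w := by
      intro w
      have := aux_first_order φ hφdiff hφconv p w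
      rw [hφgrad] at this
      simpa [hc, sub_self] using this
    have hGq : gradient φ q = gradient g q - c := hφgrad q
    have hdesc := aux_descent φ hφdiff hL.le hφlip q (q - (1/(2*L)) • (gradient g q - c))
    rw [hGq] at hdesc
    set G := gradient g q - c with hG
    have e1 : (q - (1/(2*L)) • G) - q = -((1/(2*L)) • G) := by abel
    have e2 : ⟪G, (q - (1/(2*L)) • G) - q⟫ = -(1/(2*L)) * ‖G‖ ^ 2 := by
      rw [e1, inner_neg_right, real_inner_smul_right, real_inner_self_eq_norm_sq]
      ring
    have e3 : ‖(q - (1/(2*L)) • G) - q‖ ^ 2 = (1/(2*L))^2 * ‖G‖ ^ 2 := by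
      rw [e1, norm_neg, norm_smul]
      rw [Real.norm_eq_abs, mul_pow, sq_abs]
    have hmin2 := hmin (q - (1/(2*L)) • G)
    have hL4 : L * ((1/(2*L))^2 * ‖G‖ ^ 2) = (1/(4*L)) * ‖G‖ ^ 2 := by
      field_simp; ring
    have hcomb : φ p ≤ φ q - (1/(4*L)) * ‖G‖ ^ 2 := by
      calc φ p ≤ φ (q - (1/(2*L)) • G) := hmin2
        _ ≤ φ q + ⟪G, (q - (1/(2*L)) • G) - q⟫ + L * ‖(q - (1/(2*L)) • G) - q‖ ^ 2 := hdesc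
        _ = φ q - (1/(2*L)) * ‖G‖ ^ 2 + L * ((1/(2*L))^2 * ‖G‖ ^ 2) := by
            rw [e2, e3]; ring
        _ = φ q - (1/(2*L)) * ‖G‖ ^ 2 + (1/(4*L)) * ‖G‖ ^ 2 := by rw [hL4]
        _ ≤ φ q - (1/(4*L)) * ‖G‖ ^ 2 := by
            have h4 : 0 ≤ (1/(4*L)) * ‖G‖ ^ 2 := by positivity
            have h5 : 0 ≤ (1/(2*L)) * ‖G‖ ^ 2 - 2 * ((1/(4*L)) * ‖G‖ ^ 2) := by
              have : (1/(2*L)) * ‖G‖ ^ 2 = 2 * ((1/(4*L)) * ‖G‖ ^ 2) := by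
                field_simp
                ring
              linarith
            linarith
    have hφp : φ p = g p - ⟪c, p⟫ := rfl
    have hφq : φ q = g q - ⟪c, q⟫ := rfl
    rw [hφp, hφq] at hcomb
    have hh : ⟪c, p - q⟫ = ⟪c, p⟫ - ⟪c, q⟫ := inner_sub_right _ _ _
    linarith
  have h1 := key u v
  have h2 := key v u
  have e1 : ⟪gradient g u - gradient g v, u - v⟫
      = ⟪gradient g u, u - v⟫ - ⟪gradient g v, u - v⟫ := inner_sub_left _ _ _
  have e2 : ⟪gradient g v, v - u⟫ = -⟪gradient g v, u - v⟫ := by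
    rw [show v - u = -(u - v) by abel, inner_neg_right]
  have e3 : ‖gradient g v - gradient g u‖ = ‖gradient g u - gradient g v‖ :=
    norm_sub_rev _ _
  rw [e3] at h1
  rw [e2] at h2
  have hsum : (1/(2*L)) * ‖gradient g u - gradient g v‖ ^ 2
      ≤ ⟪gradient g u, u - v⟫ - ⟪gradient g v, u - v⟫ := by
    have h14 : (1/(2*L)) = 2 * (1/(4*L)) := by
      field_simp
      ring
    rw [h14]
    linarith [h1, h2]
  rw [e1]
  have hpos : (0:ℝ) < 2 * L := by linarith
  rw [div_mul_eq_mul_div, one_mul] at hsum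
  calc ‖gradient g u - gradient g v‖ ^ 2
      = (2*L) * (‖gradient g u - gradient g v‖ ^ 2 / (2*L)) := by field_simp
    _ ≤ (2*L) * (⟪gradient g u, u - v⟫ - ⟪gradient g v, u - v⟫) := by
        apply mul_le_mul_of_nonneg_left _ hpos.le
        exact hsum
    _ = 2 * L * (⟪gradient g u, u - v⟫ - ⟪gradient g v, u - v⟫) := by ring

lemma aux_grad_normsq (σ : ℝ) (w : E) :
    HasGradientAt (fun w : E => σ / 2 * ‖w‖ ^ 2) (σ • w) w := by
  have h1 : HasFDerivAt (fun x : E => ‖x‖ ^ 2) (2 • (innerSL ℝ w)) w :=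
    (hasStrictFDerivAt_norm_sq w).hasFDerivAt
  have h2 := h1.const_mul (σ / 2)
  rw [hasGradientAt_iff_hasFDerivAt]
  convert h2 using 1
  ext y
  simp [InnerProductSpace.toDual_apply_apply, real_inner_smul_left]
  ring
  ext y
  simp [InnerProductSpace.toDual_apply_apply, real_inner_smul_left]
  ring

lemma aux_strongmono (g : E → ℝ) (hg : Differentiable ℝ g) {σ : ℝ}
    (hstrong : ConvexOn ℝ univ (fun w => g w - σ / 2 * ‖w‖ ^ 2)) (u v : E) :
    σ * ‖u - v‖ ^ 2 ≤ ⟪gradient g u - gradient g v, u - v⟫ := by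
  set h : E → ℝ := fun w => g w - σ / 2 * ‖w‖ ^ 2 with hh
  have hgrad : ∀ w, HasGradientAt h (gradient g w - σ • w) w := by
    intro w
    have h1 : HasFDerivAt g (InnerProductSpace.toDual ℝ E (gradient g w)) w :=
      (hg w).hasGradientAt.hasFDerivAt
    have h2 := (aux_grad_normsq σ w).hasFDerivAt
    have h3 := h1.sub h2
    rw [← map_sub] at h3
    simpa [-toDual_gradient, Pi.sub_def, hh] using h3.hasGradientAt
  have hdiff : Differentiable ℝ h := fun w => (hgrad w).differentiableAt
  have hgr : ∀ w, gradient h w = gradient g w - σ • w := fun w => (hgrad w).gradient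
  have h1 := aux_first_order h hdiff hstrong u v
  have h2 := aux_first_order h hdiff hstrong v u
  rw [hgr] at h1 h2
  have e1 : ⟪gradient g u - σ • u, v - u⟫
      = ⟪gradient g u, v - u⟫ - σ * ⟪u, v - u⟫ := by
    rw [inner_sub_left, real_inner_smul_left]
  have e2 : ⟪gradient g v - σ • v, u - v⟫
      = ⟪gradient g v, u - v⟫ - σ * ⟪v, u - v⟫ := by
    rw [inner_sub_left, real_inner_smul_left]
  rw [e1] at h1
  rw [e2] at h2
  have e3 : ⟪gradient g u, v - u⟫ = -⟪gradient g u, u - v⟫ := by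
    rw [show v - u = -(u - v) by abel, inner_neg_right]
  have e4 : ⟪u, v - u⟫ = -⟪u, u - v⟫ := by
    rw [show v - u = -(u - v) by abel, inner_neg_right]
  rw [e3, e4] at h1
  have e5 : ⟪gradient g u - gradient g v, u - v⟫
      = ⟪gradient g u, u - v⟫ - ⟪gradient g v, u - v⟫ := inner_sub_left _ _ _
  have e6 : ⟪u, u - v⟫ - ⟪v, u - v⟫ = ‖u - v‖ ^ 2 := by
    rw [← inner_sub_left, real_inner_self_eq_norm_sq]
  rw [e5]
  have e7 : σ * ⟪u, u - v⟫ - σ * ⟪v, u - v⟫ = σ * ‖u - v‖ ^ 2 := by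
    rw [← e6]; ring
  linarith [h1, h2, e7]

lemma aux_contract_sq (g : E → ℝ) (hg : Differentiable ℝ g) {σ L : ℝ} (hσ : 0 < σ)
    (hL : 0 < L)
    (hstrong : ConvexOn ℝ univ (fun w => g w - σ / 2 * ‖w‖ ^ 2))
    (hlip : ∀ a b, ‖gradient g a - gradient g b‖ ≤ L * ‖a - b‖)
    {t θ : ℝ} (ht : 0 ≤ t) (hθ0 : 0 ≤ θ) (htL : t * L ≤ 1 - θ) (u v : E) :
    ‖(u - v) - t • (gradient g u - gradient g v)‖ ^ 2
      ≤ (1 - 2 * t * θ * σ) * ‖u - v‖ ^ 2 := by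
  have hconv : ConvexOn ℝ univ g := aux_gconv g hσ.le hstrong
  have hco := aux_coco g hg hconv hL hlip u v
  have hsm := aux_strongmono g hg hstrong u v
  set d := u - v with hd
  set G := gradient g u - gradient g v with hG
  have hexp : ‖d - t • G‖ ^ 2 = ‖d‖ ^ 2 - 2 * t * ⟪G, d⟫ + t ^ 2 * ‖G‖ ^ 2 := by
    rw [← real_inner_self_eq_norm_sq, inner_sub_sub_self, real_inner_smul_left,
      real_inner_smul_right, real_inner_smul_left, real_inner_smul_right,
      real_inner_self_eq_norm_sq, real_inner_self_eq_norm_sq, real_inner_comm d G]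
    ring
  rw [hexp]
  have hcomm : ⟪G, d⟫ = ⟪d, G⟫ := real_inner_comm _ _
  have hip : 0 ≤ ⟪G, d⟫ := le_trans (by positivity) hsm
  have hD : 0 ≤ ‖d‖ ^ 2 := by positivity
  have hN : 0 ≤ ‖G‖ ^ 2 := by positivity
  -- hco : ‖G‖^2 ≤ 2 * L * ⟪G, d⟫
  have k1 : t * θ * (σ * ‖d‖ ^ 2) ≤ t * θ * ⟪G, d⟫ :=
    mul_le_mul_of_nonneg_left hsm (by positivity)
  have k2 : t ^ 2 * ‖G‖ ^ 2 ≤ t ^ 2 * (2 * L * ⟪G, d⟫) :=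
    mul_le_mul_of_nonneg_left hco (by positivity)
  have k3 : 0 ≤ t * ⟪G, d⟫ * ((1 - θ) - t * L) :=
    mul_nonneg (mul_nonneg ht hip) (by linarith)
  nlinarith [k1, k2, k3]

end Aux

lemma aux_grad_slice_cont {n m : ℕ} (F : EuclideanSpace ℝ (Fin n) → EuclideanSpace ℝ (Fin m) → ℝ)
    (hF2 : ContDiff ℝ 2 (fun p : EuclideanSpace ℝ (Fin n) × EuclideanSpace ℝ (Fin m) => F p.1 p.2)) :
    Continuous (fun p : EuclideanSpace ℝ (Fin n) × EuclideanSpace ℝ (Fin m) =>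
      gradient (F p.1) p.2) := by
  set Fu := fun p : EuclideanSpace ℝ (Fin n) × EuclideanSpace ℝ (Fin m) => F p.1 p.2 with hFu
  have hdiff : Differentiable ℝ Fu := hF2.differentiable two_ne_zero
  have hrep : ∀ (x : EuclideanSpace ℝ (Fin n)) (w : EuclideanSpace ℝ (Fin m)),
      gradient (F x) w = (InnerProductSpace.toDual ℝ (EuclideanSpace ℝ (Fin m))).symm
        ((fderiv ℝ Fu (x, w)).comp
          (ContinuousLinearMap.inr ℝ (EuclideanSpace ℝ (Fin n)) (EuclideanSpace ℝ (Fin m)))) := by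
    intro x w
    have h1 : HasFDerivAt (fun w : EuclideanSpace ℝ (Fin m) => (x, w))
        (ContinuousLinearMap.inr ℝ (EuclideanSpace ℝ (Fin n)) (EuclideanSpace ℝ (Fin m))) w :=
      hasFDerivAt_prodMk_right x w
    have h2 : HasFDerivAt Fu (fderiv ℝ Fu (x, w)) (x, w) := (hdiff (x, w)).hasFDerivAt
    have h3 : HasFDerivAt (F x)
        ((fderiv ℝ Fu (x, w)).comp
          (ContinuousLinearMap.inr ℝ (EuclideanSpace ℝ (Fin n)) (EuclideanSpace ℝ (Fin m)))) w :=
      h2.comp w h1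
    exact h3.hasGradientAt.gradient
  have hc1 : Continuous (fderiv ℝ Fu) := hF2.continuous_fderiv two_ne_zero
  have hc2 : Continuous fun p : EuclideanSpace ℝ (Fin n) × EuclideanSpace ℝ (Fin m) =>
      (fderiv ℝ Fu p).comp
        (ContinuousLinearMap.inr ℝ (EuclideanSpace ℝ (Fin n)) (EuclideanSpace ℝ (Fin m))) :=
    hc1.clm_comp continuous_const
  have hc3 := ((InnerProductSpace.toDual ℝ (EuclideanSpace ℝ (Fin m))).symm.continuous).comp hc2
  have heq : (fun p : EuclideanSpace ℝ (Fin n) × EuclideanSpace ℝ (Fin m) =>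
      gradient (F p.1) p.2) = fun p =>
      (InnerProductSpace.toDual ℝ (EuclideanSpace ℝ (Fin m))).symm
        ((fderiv ℝ Fu p).comp
          (ContinuousLinearMap.inr ℝ (EuclideanSpace ℝ (Fin n)) (EuclideanSpace ℝ (Fin m)))) := by
    funext p
    rw [hrep p.1 p.2]
  rw [heq]
  exact hc3

lemma aux_gradzero {m : ℕ} (g : EuclideanSpace ℝ (Fin m) → ℝ) (v : EuclideanSpace ℝ (Fin m))
    (hmin : ∀ w, g v ≤ g w) : gradient g v = 0 := by
  have hloc : IsLocalMin g v := Filter.Eventually.of_forall hmin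
  have := hloc.fderiv_eq_zero
  unfold gradient
  rw [this, map_zero]
set_option maxHeartbeats 1600000 in
theorem stmt17 {n m : ℕ}
    (X : Set (EuclideanSpace ℝ (Fin n))) (hX : IsCompact X)
    (F f : EuclideanSpace ℝ (Fin n) → EuclideanSpace ℝ (Fin m) → ℝ)
    (hF2 : ContDiff ℝ 2 (fun p : EuclideanSpace ℝ (Fin n) × EuclideanSpace ℝ (Fin m) => F p.1 p.2))
    (hf2 : ContDiff ℝ 2 (fun p : EuclideanSpace ℝ (Fin n) × EuclideanSpace ℝ (Fin m) => f p.1 p.2))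
    (LF Lf σ : ℝ) (hσ : 0 < σ)
    (hFconv : ∀ x, ConvexOn ℝ univ (F x))
    (hFlip : ∀ x a b, ‖gradient (F x) a - gradient (F x) b‖ ≤ LF * ‖a - b‖)
    (hFbdd : ∀ x, BddBelow (Set.range (F x)))
    (hfstrong : ∀ x, ConvexOn ℝ univ (fun w => f x w - σ / 2 * ‖w‖ ^ 2))
    (hflip : ∀ x a b, ‖gradient (f x) a - gradient (f x) b‖ ≤ Lf * ‖a - b‖)
    -- f is level-bounded in y uniformly in x ∈ X
    (hlevel : ∀ r : ℝ, Bornology.IsBounded {w : EuclideanSpace ℝ (Fin m) | ∃ x ∈ X, f x w ≤ r})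
    -- y*(x) : the unique minimizer of f(x,·)
    (ystar : EuclideanSpace ℝ (Fin n) → EuclideanSpace ℝ (Fin m))
    (hystar : ∀ x w, f x (ystar x) ≤ f x w)
    (hystaruniq : ∀ x w, (∀ w', f x w ≤ f x w') → w = ystar x)
    (s μ : ℝ) (hs : s ∈ Ioo 0 (1 / max LF Lf)) (hμ : μ ∈ Ioo (0 : ℝ) 1)
    (α : ℕ → ℝ) (hαpos : ∀ k, 0 < α k) (hαanti : Antitone α) (hαto : Tendsto α atTop (𝓝 0))
    (βlow cβ : ℝ) (hβlow : 0 < βlow) (hcβ : 0 < cβ)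
    (β : ℕ → ℝ) (hβ : ∀ k, β k ∈ Icc βlow 1) (hβanti : Antitone β)
    (hβdiff : ∀ k ≥ 1, |β k - β (k - 1)| ≤ cβ / ((k : ℝ) + 1) ^ 2)
    (y₀ : EuclideanSpace ℝ (Fin m))
    (y : ℕ → EuclideanSpace ℝ (Fin n) → EuclideanSpace ℝ (Fin m))
    (hy0 : ∀ x, y 0 x = y₀)
    (hyrec : ∀ k x, y (k + 1) x =
      y k x - ((α k * μ * s) • gradient (F x) (y k x)
             + (β k * (1 - μ) * s) • gradient (f x) (y k x))) :
    ∀ ε > (0 : ℝ), ∃ N : ℕ, ∀ k ≥ N, ∀ x ∈ X, ‖y k x - ystar x‖ ≤ ε := by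
  rcases subsingleton_or_nontrivial (EuclideanSpace ℝ (Fin m)) with hsub | hnt
  · intro ε hε
    refine ⟨0, fun k _ x _ => ?_⟩
    rw [Subsingleton.elim (y k x) (ystar x), sub_self, norm_zero]
    linarith
  rcases X.eq_empty_or_nonempty with hXe | ⟨x₀, hx₀⟩
  · intro ε hε
    exact ⟨0, fun k _ x hx => absurd hx (by simp [hXe])⟩
  obtain ⟨hs0, hs1⟩ := hs
  obtain ⟨hμ0, hμ1⟩ := hμ
  have h1μ : 0 < 1 - μ := by linarith
  have hmaxpos : 0 < max LF Lf := by
    by_contra h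
    push_neg at h
    have h0 : 1 / max LF Lf ≤ 0 := one_div_nonpos.mpr h
    linarith
  have hsmax : s * max LF Lf < 1 := by
    have := (lt_div_iff₀ hmaxpos).1 hs1
    linarith
  -- differentiability of slices
  have hfd : ∀ x, Differentiable ℝ (f x) := by
    intro x
    have h1 : Differentiable ℝ (fun p : EuclideanSpace ℝ (Fin n) × EuclideanSpace ℝ (Fin m) =>
        f p.1 p.2) := hf2.differentiable two_ne_zero
    intro w
    exact (h1 (x, w)).comp w ((differentiableAt_const x).prodMk differentiableAt_id)
  -- σ ≤ Lf
  obtain ⟨w1, hw1⟩ := exists_ne (0 : EuclideanSpace ℝ (Fin m))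
  have hσLf : σ ≤ Lf := by
    have hsm := aux_strongmono (f x₀) (hfd x₀) (hfstrong x₀) w1 0
    have hcs := real_inner_le_norm (gradient (f x₀) w1 - gradient (f x₀) 0) (w1 - 0)
    have hlip := hflip x₀ w1 0
    have hw : 0 < ‖w1 - 0‖ := by
      rw [sub_zero]
      exact norm_pos_iff.2 hw1
    have h2 : ‖w1 - 0‖ ^ 2 = ‖w1 - 0‖ * ‖w1 - 0‖ := sq (‖w1 - 0‖)
    nlinarith [hsm, hcs, mul_le_mul_of_nonneg_right hlip (norm_nonneg (w1 - 0)), h2,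
      mul_pos hw hw]
  have hLf : 0 < Lf := lt_of_lt_of_le hσ hσLf
  have hsLf : s * Lf < 1 := by
    have : s * Lf ≤ s * max LF Lf := mul_le_mul_of_nonneg_left (le_max_right _ _) hs0.le
    linarith
  set θ := 1 - s * Lf with hθdef
  have hθpos : 0 < θ := by simp [hθdef]; linarith
  set t₀ := βlow * (1 - μ) * s with ht₀def
  have ht₀ : 0 < t₀ := by positivity
  set M := max (1 - 2 * t₀ * θ * σ) 0 with hMdef
  have hM0 : 0 ≤ M := le_max_right _ _
  have hM1 : M < 1 := by
    apply max_lt _ one_pos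
    nlinarith [mul_pos (mul_pos ht₀ hθpos) hσ]
  set ρ := Real.sqrt M with hρdef
  have hρ0 : 0 ≤ ρ := Real.sqrt_nonneg _
  have hρsq : ρ ^ 2 = M := Real.sq_sqrt hM0
  have hρ1 : ρ < 1 := by
    nlinarith [hρsq, hρ0, hM1]
  -- contraction
  have hgradzero : ∀ x, gradient (f x) (ystar x) = 0 := fun x =>
    aux_gradzero (f x) (ystar x) (hystar x)
  have hcontr : ∀ (x : EuclideanSpace ℝ (Fin n)) (u : EuclideanSpace ℝ (Fin m)),
      ∀ t : ℝ, t₀ ≤ t → t ≤ s →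
      ‖(u - ystar x) - t • gradient (f x) u‖ ≤ ρ * ‖u - ystar x‖ := by
    intro x u t htl htu
    have ht0 : 0 ≤ t := le_trans ht₀.le htl
    have htL : t * Lf ≤ 1 - θ := by
      have : t * Lf ≤ s * Lf := mul_le_mul_of_nonneg_right htu hLf.le
      simp [hθdef]
      linarith
    have hsq := aux_contract_sq (f x) (hfd x) hσ hLf (hfstrong x) (hflip x)
      ht0 hθpos.le htL u (ystar x)
    rw [hgradzero x, sub_zero] at hsq
    have h2 : (1 - 2 * t * θ * σ) * ‖u - ystar x‖ ^ 2 ≤ M * ‖u - ystar x‖ ^ 2 := by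
      apply mul_le_mul_of_nonneg_right _ (by positivity)
      have h3 : 1 - 2 * t * θ * σ ≤ 1 - 2 * t₀ * θ * σ := by
        have := mul_le_mul_of_nonneg_right
          (mul_le_mul_of_nonneg_right htl hθpos.le) hσ.le
        linarith
      exact le_trans h3 (le_max_left _ _)
    have h4 : ‖(u - ystar x) - t • gradient (f x) u‖ ^ 2 ≤ (ρ * ‖u - ystar x‖) ^ 2 := by
      rw [mul_pow, hρsq]
      linarith
    have h5 : 0 ≤ ρ * ‖u - ystar x‖ := by positivity
    nlinarith [norm_nonneg ((u - ystar x) - t • gradient (f x) u), h4, h5]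
  -- bound on ystar over X
  have hcl : Continuous fun x => f x y₀ :=
    hf2.continuous.comp (continuous_id.prodMk continuous_const)
  obtain ⟨x₁, hx₁X, hx₁max⟩ := hX.exists_isMaxOn ⟨x₀, hx₀⟩ hcl.continuousOn
  obtain ⟨R, hR⟩ := (hlevel (f x₁ y₀)).subset_closedBall (0 : EuclideanSpace ℝ (Fin m))
  have hystarR : ∀ x ∈ X, ‖ystar x‖ ≤ R := by
    intro x hx
    have hmem : ystar x ∈ {w : EuclideanSpace ℝ (Fin m) | ∃ x ∈ X, f x w ≤ f x₁ y₀} :=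
      ⟨x, hx, le_trans (hystar x y₀) (hx₁max hx)⟩
    have := hR hmem
    rwa [mem_closedBall, dist_zero_right] at this
  have hR0 : 0 ≤ R := le_trans (norm_nonneg _) (hystarR x₀ hx₀)
  -- bound on ∥∇F(x,0)∥ over X
  have hGcont := aux_grad_slice_cont F hF2
  have hGc : Continuous fun x : EuclideanSpace ℝ (Fin n) => ‖gradient (F x) (0 : EuclideanSpace ℝ (Fin m))‖ :=
    (hGcont.comp (continuous_id.prodMk continuous_const)).norm
  obtain ⟨x₂, hx₂X, hx₂max⟩ := hX.exists_isMaxOn ⟨x₀, hx₀⟩ hGc.continuousOn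
  set C₁ := ‖gradient (F x₂) (0 : EuclideanSpace ℝ (Fin m))‖ with hC₁def
  have hC₁0 : 0 ≤ C₁ := norm_nonneg _
  set LF' := max LF 0 with hLF'def
  have hLF'0 : 0 ≤ LF' := le_max_right _ _
  have hFlip' : ∀ x a b, ‖gradient (F x) a - gradient (F x) b‖ ≤ LF' * ‖a - b‖ := by
    intro x a b
    exact le_trans (hFlip x a b)
      (mul_le_mul_of_nonneg_right (le_max_left _ _) (norm_nonneg _))
  set C := C₁ + LF' * R with hCdef
  have hC0 : 0 ≤ C := add_nonneg hC₁0 (mul_nonneg hLF'0 hR0)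
  have hgradFbound : ∀ x ∈ X, ∀ u : EuclideanSpace ℝ (Fin m),
      ‖gradient (F x) u‖ ≤ C + LF' * ‖u - ystar x‖ := by
    intro x hx u
    have h1 : ‖gradient (F x) u‖
        ≤ ‖gradient (F x) (ystar x)‖ + ‖gradient (F x) u - gradient (F x) (ystar x)‖ := by
      have := norm_add_le (gradient (F x) (ystar x))
        (gradient (F x) u - gradient (F x) (ystar x))
      rwa [add_sub_cancel] at this
    have h2 : ‖gradient (F x) u - gradient (F x) (ystar x)‖ ≤ LF' * ‖u - ystar x‖ :=
      hFlip' x u (ystar x)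
    have h3 : ‖gradient (F x) (ystar x)‖
        ≤ ‖gradient (F x) 0‖ + ‖gradient (F x) (ystar x) - gradient (F x) 0‖ := by
      have := norm_add_le (gradient (F x) (0 : EuclideanSpace ℝ (Fin m)))
        (gradient (F x) (ystar x) - gradient (F x) 0)
      rwa [add_sub_cancel] at this
    have h4 : ‖gradient (F x) (ystar x) - gradient (F x) 0‖ ≤ LF' * R := by
      have := hFlip' x (ystar x) 0
      rw [sub_zero] at this
      exact le_trans this (mul_le_mul_of_nonneg_left (hystarR x hx) hLF'0)
    have h5 : ‖gradient (F x) (0 : EuclideanSpace ℝ (Fin m))‖ ≤ C₁ := hx₂max hx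
    simp only [hCdef]
    linarith
  -- the key recursion inequality
  set A := fun k => α k * μ * s with hAdef
  have hA0 : ∀ k, 0 < A k := fun k => by
    have := hαpos k
    positivity
  have hkey : ∀ k, ∀ x ∈ X, ‖y (k + 1) x - ystar x‖
      ≤ (ρ + A k * LF') * ‖y k x - ystar x‖ + A k * C := by
    intro k x hx
    have ht1 : t₀ ≤ β k * (1 - μ) * s := by
      have := (hβ k).1
      have h := mul_le_mul_of_nonneg_right
        (mul_le_mul_of_nonneg_right this h1μ.le) hs0.le
      simpa [ht₀def] using h
    have ht2 : β k * (1 - μ) * s ≤ s := by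
      have h1 : β k * (1 - μ) ≤ 1 :=
        mul_le_one₀ (hβ k).2 h1μ.le (by linarith)
      calc β k * (1 - μ) * s ≤ 1 * s := mul_le_mul_of_nonneg_right h1 hs0.le
        _ = s := one_mul s
    have hcon := hcontr x (y k x) _ ht1 ht2
    have heq : y (k + 1) x - ystar x
        = ((y k x - ystar x) - (β k * (1 - μ) * s) • gradient (f x) (y k x))
          - (α k * μ * s) • gradient (F x) (y k x) := by
      rw [hyrec k x]
      abel
    calc ‖y (k + 1) x - ystar x‖
        = ‖((y k x - ystar x) - (β k * (1 - μ) * s) • gradient (f x) (y k x))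
            - (α k * μ * s) • gradient (F x) (y k x)‖ := by rw [heq]
      _ ≤ ‖(y k x - ystar x) - (β k * (1 - μ) * s) • gradient (f x) (y k x)‖
            + ‖(α k * μ * s) • gradient (F x) (y k x)‖ := norm_sub_le _ _
      _ ≤ ρ * ‖y k x - ystar x‖ + A k * ‖gradient (F x) (y k x)‖ := by
          apply add_le_add hcon
          rw [norm_smul, Real.norm_eq_abs, abs_of_pos (hA0 k)]
      _ ≤ ρ * ‖y k x - ystar x‖ + A k * (C + LF' * ‖y k x - ystar x‖) := by
          apply add_le_add_right
          exact mul_le_mul_of_nonneg_left (hgradFbound x hx (y k x)) (hA0 k).le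
      _ = (ρ + A k * LF') * ‖y k x - ystar x‖ + A k * C := by ring
  -- uniform bound at each step
  set B : ℕ → ℝ := fun k => Nat.rec (‖y₀‖ + R)
    (fun k Bk => (ρ + A k * LF') * Bk + A k * C) k with hBdef
  have hBrec : ∀ k, B (k + 1) = (ρ + A k * LF') * B k + A k * C := fun k => rfl
  have hB : ∀ k, ∀ x ∈ X, ‖y k x - ystar x‖ ≤ B k := by
    intro k
    induction k with
    | zero =>
      intro x hx
      rw [hy0]
      exact le_trans (norm_sub_le _ _) (by simp [hBdef]; linarith [hystarR x hx])
    | succ k ih =>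
      intro x hx
      have h1 := hkey k x hx
      have h2 : (ρ + A k * LF') * ‖y k x - ystar x‖ ≤ (ρ + A k * LF') * B k := by
        apply mul_le_mul_of_nonneg_left (ih x hx)
        have := (hA0 k).le
        positivity
      rw [hBrec]
      linarith
  -- the ε-argument
  intro ε hε
  set ρ' := (1 + ρ) / 2 with hρ'def
  have hρ'0 : 0 ≤ ρ' := by simp [hρ'def]; linarith
  have hρ'1 : ρ' < 1 := by simp [hρ'def]; linarith
  have hAto : Tendsto A atTop (𝓝 0) := by
    have := (hαto.mul_const μ).mul_const s
    simpa [hAdef, mul_assoc] using this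
  set δ := min ((1 - ρ) / 2 / (LF' + 1)) ((1 - ρ') * (ε / 2) / (C + 1)) with hδdef
  have hδ : 0 < δ := by
    apply lt_min
    · apply div_pos (by linarith) (by linarith)
    · apply div_pos (by nlinarith) (by linarith)
  have hev : ∀ᶠ k in atTop, A k < δ := hAto.eventually (gt_mem_nhds hδ)
  obtain ⟨N₁, hN₁⟩ := eventually_atTop.1 hev
  have hd1 : ∀ k ≥ N₁, A k * LF' ≤ (1 - ρ) / 2 := by
    intro k hk
    have h1 : δ ≤ (1 - ρ) / 2 / (LF' + 1) := min_le_left _ _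
    have h2 : δ * (LF' + 1) ≤ (1 - ρ) / 2 :=
      (le_div_iff₀ (by linarith)).1 h1
    have h3 := (hN₁ k hk).le
    nlinarith [(hA0 k).le, hLF'0, hδ]
  have hd2 : ∀ k ≥ N₁, A k * C ≤ (1 - ρ') * (ε / 2) := by
    intro k hk
    have h1 : δ ≤ (1 - ρ') * (ε / 2) / (C + 1) := min_le_right _ _
    have h2 : δ * (C + 1) ≤ (1 - ρ') * (ε / 2) :=
      (le_div_iff₀ (by linarith)).1 h1
    have h3 := (hN₁ k hk).le
    nlinarith [(hA0 k).le, hC0, hδ]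
  have hstep : ∀ k ≥ N₁, ∀ x ∈ X, ‖y (k + 1) x - ystar x‖
      ≤ ρ' * ‖y k x - ystar x‖ + (1 - ρ') * (ε / 2) := by
    intro k hk x hx
    have h1 := hkey k x hx
    have h2 : (ρ + A k * LF') * ‖y k x - ystar x‖ ≤ ρ' * ‖y k x - ystar x‖ := by
      apply mul_le_mul_of_nonneg_right _ (norm_nonneg _)
      have := hd1 k hk
      simp [hρ'def]
      linarith
    exact le_trans h1 (add_le_add h2 (hd2 k hk))
  have hBN0 : 0 ≤ B N₁ := le_trans (norm_nonneg _) (hB N₁ x₀ hx₀)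
  have hiter : ∀ j, ∀ x ∈ X, ‖y (N₁ + j) x - ystar x‖ ≤ ρ' ^ j * B N₁ + ε / 2 := by
    intro j
    induction j with
    | zero =>
      intro x hx
      simp only [Nat.add_zero, pow_zero, one_mul]
      linarith [hB N₁ x hx]
    | succ j ih =>
      intro x hx
      have h1 : N₁ + (j + 1) = (N₁ + j) + 1 := by omega
      rw [h1]
      have h2 := hstep (N₁ + j) (Nat.le_add_right _ _) x hx
      have h3 := ih x hx
      have h4 : ρ' * ‖y (N₁ + j) x - ystar x‖ ≤ ρ' * (ρ' ^ j * B N₁ + ε / 2) :=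
        mul_le_mul_of_nonneg_left h3 hρ'0
      have h5 : ρ' * (ρ' ^ j * B N₁ + ε / 2) + (1 - ρ') * (ε / 2)
          = ρ' ^ (j + 1) * B N₁ + ε / 2 := by ring
      linarith
  have hpowto : Tendsto (fun j : ℕ => ρ' ^ j * B N₁) atTop (𝓝 0) := by
    have := (tendsto_pow_atTop_nhds_zero_of_lt_one hρ'0 hρ'1).mul_const (B N₁)
    simpa using this
  have hevp : ∀ᶠ j in atTop, ρ' ^ j * B N₁ < ε / 2 :=
    hpowto.eventually (gt_mem_nhds (by linarith))
  obtain ⟨J, hJ⟩ := eventually_atTop.1 hevp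
  refine ⟨N₁ + J, fun k hk x hx => ?_⟩
  have hkN : k = N₁ + (k - N₁) := by omega
  rw [hkN]
  have h1 := hiter (k - N₁) x hx
  have h2 : ρ' ^ (k - N₁) * B N₁ ≤ ρ' ^ J * B N₁ := by
    apply mul_le_mul_of_nonneg_right _ hBN0
    exact pow_le_pow_of_le_one hρ'0 hρ'1.le (by omega)
  have h3 := (hJ J le_rfl).le
  linarith
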